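/- Let (S,*) be a ℤ₂-irreducible k-cycle for some k ≥ 1. Then |V(S)| ≥ 2k+2, with equality if and only if (S,*) is a trivial ℤ₂-irreducible k-cycle or S is isomorphic to B_k (the boundary complex of the (k+1)-dimensional crosspolytope), i.e. there is a bijection of vertex sets carrying the facets of S, with multiplicity, to the facets of B_k. -/

import Mathlib

open Matrix

/-! ### Frameworks and infinitesimal rigidity -/

/-- An infinitesimal motion of the framework given by the graph `G` restricted to the
vertex set `W`, realised by `p` in `ℝ^d`. -/
def IsMotion {V : Type*} (d : ℕ) (G : SimpleGraph V) (W : Set V)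
    (p q : V → Fin d → ℝ) : Prop :=
  ∀ u ∈ W, ∀ v ∈ W, G.Adj u v → (p u - p v) ⬝ᵥ (q u - q v) = 0

/-- A trivial infinitesimal motion: `q = S ∘ p + c` on `W` for a skew-symmetric `S`. -/
def IsTrivialMotion {V : Type*} (d : ℕ) (W : Set V) (p q : V → Fin d → ℝ) : Prop :=
  ∃ (S : Matrix (Fin d) (Fin d) ℝ) (c : Fin d → ℝ), Sᵀ = -S ∧ ∀ u ∈ W, q u = S *ᵥ p u + c

/-- The framework on vertex set `W` with edges those of `G` inside `W`, realised by `p`,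
is infinitesimally rigid. -/
def IsInfRigid {V : Type*} (d : ℕ) (G : SimpleGraph V) (W : Set V)
    (p : V → Fin d → ℝ) : Prop :=
  ∀ q : V → Fin d → ℝ, IsMotion d G W p q → IsTrivialMotion d W p q

/-- `σ` is a free involution on `X`, i.e. a vertex pairing on `X`. -/
structure IsVertexPairing {V : Type*} (X : Set V) (σ : V → V) : Prop where
  mapsTo : ∀ x ∈ X, σ x ∈ X
  invol : ∀ x ∈ X, σ (σ x) = x
  free : ∀ x ∈ X, σ x ≠ x

/-- A non-adjacent vertex pairing of the graph `G`. -/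
def IsNonAdjPairing {V : Type*} (G : SimpleGraph V) (X : Set V) (σ : V → V) : Prop :=
  IsVertexPairing X σ ∧ ∀ x ∈ X, ¬ G.Adj x (σ x)

/-- `(G, σ)` is a `ℤ₂`-symmetric graph: `σ` is a free involutive automorphism of `G`
with `u (σ u)` never an edge. -/
def IsZ2SymGraph {V : Type*} (G : SimpleGraph V) (σ : V → V) : Prop :=
  (∀ x, σ (σ x) = x) ∧ (∀ x, σ x ≠ x) ∧ (∀ u v, G.Adj u v ↔ G.Adj (σ u) (σ v)) ∧
    ∀ x, ¬ G.Adj x (σ x)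

/-- `γ` generates a point group of `ℝ^d` of order two: it is orthogonal, an involution
and not the identity. -/
def IsPointGroupInvolution {d : ℕ} (γ : Matrix (Fin d) (Fin d) ℝ) : Prop :=
  γᵀ * γ = 1 ∧ γ * γ = 1 ∧ γ ≠ 1

/-- The diagonal matrix `I_{t,d}` whose first `t` diagonal entries are `1` and whose
remaining `d - t` diagonal entries are `-1`; it generates the point group `Γ_{t,d}`. -/
def Itd (t d : ℕ) : Matrix (Fin d) (Fin d) ℝ :=
  Matrix.diagonal fun i => if (i : ℕ) < t then (1 : ℝ) else -1

/-- `p` is `Γ`-symmetric with respect to the vertex pairing `σ : X → X`, where `Γ` is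
generated by `γ`. -/
def IsGammaSym {V : Type*} {d : ℕ} (X : Set V) (σ : V → V)
    (γ : Matrix (Fin d) (Fin d) ℝ) (p : V → Fin d → ℝ) : Prop :=
  ∀ x ∈ X, p (σ x) = γ *ᵥ p x

/-- `(G|_W, σ)` is `Γ`-rigid in `ℝ^d`, where `Γ` is the point group generated by `γ`:
some `Γ`-symmetric realisation is infinitesimally rigid. -/
def GammaRigid {V : Type*} (d : ℕ) (G : SimpleGraph V) (W X : Set V) (σ : V → V)
    (γ : Matrix (Fin d) (Fin d) ℝ) : Prop :=
  ∃ p : V → Fin d → ℝ, IsGammaSym X σ γ p ∧ IsInfRigid d G W p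

/-- The set `X_W = (X ∩ W) ∩ (X ∩ W)*`. -/
def pairedPart {V : Type*} (X : Set V) (σ : V → V) (W : Set V) : Set V :=
  (X ∩ W) ∩ (σ '' (X ∩ W))

/-- The simple graph `G/uv` obtained from `G` by contracting `v` onto `u`. -/
def contractEdge {V : Type*} (G : SimpleGraph V) (u v : V) : SimpleGraph V :=
  SimpleGraph.fromRel fun a b =>
    a ≠ v ∧ b ≠ v ∧ (G.Adj a b ∨ (a = u ∧ G.Adj v b) ∨ (b = u ∧ G.Adj a v))

/-- The row of the rigidity matrix indexed by an (unordered) edge `e`, viewed as the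
linear functional `q ↦ (p u - p v) ⬝ᵥ (q u - q v)`. -/
def rigidityRow {V : Type*} (d : ℕ) (p : V → Fin d → ℝ) (e : Sym2 V)
    (q : V → Fin d → ℝ) : ℝ :=
  Sym2.lift ⟨fun u v => (p u - p v) ⬝ᵥ (q u - q v), fun u v => by
    show (p u - p v) ⬝ᵥ (q u - q v) = (p v - p u) ⬝ᵥ (q v - q u)
    rw [show p u - p v = -(p v - p u) from (neg_sub _ _).symm,
      show q u - q v = -(q v - q u) from (neg_sub _ _).symm,
      neg_dotProduct, dotProduct_neg, neg_neg]⟩ e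

/-- The rigidity matrix `R(G,p)` is row-independent. -/
def RowIndependent {V : Type*} (d : ℕ) (G : SimpleGraph V) (p : V → Fin d → ℝ) : Prop :=
  LinearIndependent ℝ fun e : G.edgeSet => rigidityRow d p e.1

/-- The graph obtained from `G` by splitting `u'` from `u` along `C₁` (deleting `D₁`)
and then splitting `v'` from `v` along `C₂` (deleting `D₂`).  The new vertices are
`u' = Sum.inr 0` and `v' = Sum.inr 1`. -/
def doubleSplit {V : Type*} (G : SimpleGraph V) (u v : V) (C₁ D₁ C₂ D₂ : Set V) :
    SimpleGraph (V ⊕ Fin 2) :=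
  SimpleGraph.fromRel fun a b =>
    (∃ s t : V, a = Sum.inl s ∧ b = Sum.inl t ∧ G.Adj s t ∧
        ¬(s = u ∧ t ∈ D₁) ∧ ¬(t = u ∧ s ∈ D₁) ∧ ¬(s = v ∧ t ∈ D₂) ∧ ¬(t = v ∧ s ∈ D₂)) ∨
    (∃ z : V, a = Sum.inr 0 ∧ b = Sum.inl z ∧ (z ∈ C₁ ∪ D₁ ∨ z = u)) ∨
    (∃ z : V, a = Sum.inr 1 ∧ b = Sum.inl z ∧ (z ∈ C₂ ∪ D₂ ∨ z = v))

/-! ### Simplicial multicomplexes -/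

/-- The vertex set `V(S)` of a simplicial multicomplex. -/
def complexVerts {V : Type*} [DecidableEq V] (S : Multiset (Finset V)) : Finset V :=
  S.toFinset.sup id

/-- The edge set `E(S)`: all 2-element subsets of facets. -/
def complexEdges {V : Type*} [DecidableEq V] (S : Multiset (Finset V)) :
    Finset (Finset V) :=
  S.toFinset.biUnion fun F => Finset.powersetCard 2 F

/-- Adjacency in the graph `G(S)` of a simplicial multicomplex. -/
def complexAdj {V : Type*} (S : Multiset (Finset V)) (a b : V) : Prop :=
  a ≠ b ∧ ∃ F ∈ S, a ∈ F ∧ b ∈ F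

/-- The graph `G(S)` of a simplicial multicomplex. -/
def complexGraph {V : Type*} (S : Multiset (Finset V)) : SimpleGraph V :=
  SimpleGraph.fromRel fun a b => ∃ F ∈ S, a ∈ F ∧ b ∈ F

/-- A simplicial `k`-multicomplex: a multiset of `(k+1)`-element sets. -/
def IsMultiComplex {V : Type*} (k : ℕ) (S : Multiset (Finset V)) : Prop :=
  ∀ F ∈ S, F.card = k + 1

/-- `F` belongs to the boundary `∂S`: it is a `k`-set contained in an odd number of
facets of `S`, counted with multiplicity. -/
def inBoundary {V : Type*} [DecidableEq V] (k : ℕ) (S : Multiset (Finset V))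
    (F : Finset V) : Prop :=
  F.card = k ∧ (S.countP fun U => F ⊆ U) % 2 = 1

instance {V : Type*} [DecidableEq V] (k : ℕ) (S : Multiset (Finset V)) (F : Finset V) :
    Decidable (inBoundary k S F) :=
  inferInstanceAs (Decidable (_ ∧ _))

/-- A simplicial `k`-cycle: a `k`-multicomplex with empty boundary. -/
def IsSimplicialCycle {V : Type*} [DecidableEq V] (k : ℕ)
    (S : Multiset (Finset V)) : Prop :=
  IsMultiComplex k S ∧ ∀ F : Finset V, ¬ inBoundary k S F

/-- A simplicial `k`-circuit: a nonempty simplicial `k`-cycle, no nonempty proper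
sub-multiset of which is a simplicial `k`-cycle. -/
def IsSimplicialCircuit {V : Type*} [DecidableEq V] (k : ℕ)
    (S : Multiset (Finset V)) : Prop :=
  IsSimplicialCycle k S ∧ S ≠ 0 ∧
    ∀ T : Multiset (Finset V), T ≤ S → T ≠ 0 → T ≠ S → ¬ IsSimplicialCycle k T

/-- A trivial simplicial `k`-circuit: two copies of a single `(k+1)`-set. -/
def IsTrivialCircuit {V : Type*} (S : Multiset (Finset V)) : Prop :=
  ∃ F : Finset V, S = {F, F}

/-- The image multiset `T* = {F* : F ∈ T}` of a multicomplex under a vertex map. -/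
def starM {V W : Type*} [DecidableEq W] (f : V → W) (T : Multiset (Finset V)) :
    Multiset (Finset W) :=
  T.map (Finset.image f)

/-- `σ` is a free simplicial involution of the multicomplex `S`. -/
def IsFreeSimplicialInvolution {V : Type*} [DecidableEq V] (S : Multiset (Finset V))
    (σ : V → V) : Prop :=
  (∀ v ∈ complexVerts S, σ (σ v) = v) ∧ starM σ S = S ∧
    ∀ F : Finset V, F.Nonempty → (∃ U ∈ S, F ⊆ U) → F.image σ ≠ F

/-- A `ℤ₂`-symmetric `k`-cycle. -/
def IsZ2SymCycle {V : Type*} [DecidableEq V] (k : ℕ) (S : Multiset (Finset V))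
    (σ : V → V) : Prop :=
  IsSimplicialCycle k S ∧ IsFreeSimplicialInvolution S σ

/-- A `ℤ₂`-irreducible `k`-cycle: a nonempty `ℤ₂`-symmetric `k`-cycle, no nonempty
proper `σ`-invariant sub-multiset of which is a simplicial `k`-cycle. -/
def IsZ2IrreducibleCycle {V : Type*} [DecidableEq V] (k : ℕ) (S : Multiset (Finset V))
    (σ : V → V) : Prop :=
  IsZ2SymCycle k S σ ∧ S ≠ 0 ∧
    ∀ T : Multiset (Finset V), T ≤ S → T ≠ 0 → T ≠ S → starM σ T = T →
      ¬ IsSimplicialCycle k T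

/-- A trivial `ℤ₂`-irreducible `k`-cycle: two vertex-disjoint trivial simplicial
`k`-circuits interchanged by `σ`. -/
def IsTrivialZ2Irreducible {V : Type*} [DecidableEq V] (S : Multiset (Finset V))
    (σ : V → V) : Prop :=
  ∃ F : Finset V, S = {F, F, F.image σ, F.image σ} ∧ Disjoint F (F.image σ)

/-- The contraction `S/uv` of the multicomplex `S` (contracting `v` onto `u`). -/
def contractC {V : Type*} [DecidableEq V] (S : Multiset (Finset V)) (u v : V) :
    Multiset (Finset V) :=
  (S.filter fun U => ¬(u ∈ U ∧ v ∈ U)).map fun U =>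
    if v ∈ U then insert u (U.erase v) else U

/-- The canonical bijection `γ` from `Ast({x,y}) ∩ Ast({x*,y*})` to `(S/xy)/x*y*`,
as a map on facets. -/
def gammaFun {V : Type*} [DecidableEq V] (x y : V) (σ : V → V) (U : Finset V) :
    Finset V :=
  if y ∈ U then insert x (U.erase y)
  else if σ y ∈ U then insert (σ x) (U.erase (σ y)) else U

/-- `Ast({x,y}) ∩ Ast({x*,y*})`: the facets of `S` containing neither `{x,y}` nor
`{x*,y*}`. -/
def doubleAst {V : Type*} [DecidableEq V] (S : Multiset (Finset V)) (x y : V)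
    (σ : V → V) : Multiset (Finset V) :=
  S.filter fun U => ¬(x ∈ U ∧ y ∈ U) ∧ ¬(σ x ∈ U ∧ σ y ∈ U)

/-- `Sᵢ† = {K ⊆ V(Sᵢ) : |K| = k+1, {x,y} ⊆ K, K - x ∈ ∂Sᵢ, K - y ∈ ∂Sᵢ}`. -/
def fogDagger {V : Type*} [DecidableEq V] (k : ℕ) (Si : Multiset (Finset V))
    (x y : V) : Finset (Finset V) :=
  (complexVerts Si).powerset.filter fun K =>
    K.card = k + 1 ∧ x ∈ K ∧ y ∈ K ∧
      inBoundary k Si (K.erase x) ∧ inBoundary k Si (K.erase y)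

/-- `Sᵢ⁺ = Sᵢ ∪ Sᵢ† ∪ (Sᵢ†)*`. -/
def fogPlus {V : Type*} [DecidableEq V] (k : ℕ) (Si : Multiset (Finset V)) (x y : V)
    (σ : V → V) : Multiset (Finset V) :=
  Si ∪ (fogDagger k Si x y).val ∪ ((fogDagger k Si x y).image (Finset.image σ)).val

/-- The boundary complex `B_k` of the `(k+1)`-dimensional crosspolytope: its facets are
the transversals of the pairs `{(i,0),(i,1)}`. -/
def crossComplex (k : ℕ) : Multiset (Finset (Fin (k + 1) × Fin 2)) :=
  (Finset.univ : Finset (Fin (k + 1) → Fin 2)).val.map fun ε =>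
    Finset.univ.image fun i => (i, ε i)

/-- The graph `G(B_k)` of the `(k+1)`-dimensional crosspolytope: all pairs of vertices
are adjacent except antipodal ones. -/
def crossGraph (k : ℕ) : SimpleGraph (Fin (k + 1) × Fin 2) :=
  SimpleGraph.fromRel fun a b => a.1 ≠ b.1

/-- The antipodal vertex pairing of `G(B_k)`. -/
def antipode (k : ℕ) : Fin (k + 1) × Fin 2 → Fin (k + 1) × Fin 2 := fun a => (a.1, a.2 + 1)

/-- A `k`-pseudomanifold: a simplicial `k`-complex in which every `(k-1)`-face lies in
exactly two facets, and which is strongly connected. -/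
def IsPseudomanifold {V : Type*} [DecidableEq V] (k : ℕ)
    (S : Multiset (Finset V)) : Prop :=
  S.Nodup ∧ (∀ F ∈ S, F.card = k + 1) ∧
    (∀ F : Finset V, F.card = k → (∃ U ∈ S, F ⊆ U) →
      (S.countP fun U => F ⊆ U) = 2) ∧
    ∀ U ∈ S, ∀ W ∈ S,
      Relation.ReflTransGen (fun A B => A ∈ S ∧ B ∈ S ∧ (A ∩ B).card = k) U W

namespace S10
variable {V : Type*} [DecidableEq V]

lemma mem_cv {S : Multiset (Finset V)} {v : V} :
    v ∈ complexVerts S ↔ ∃ U ∈ S, v ∈ U := by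
  simp [complexVerts, Finset.mem_sup]

lemma subset_cv {S : Multiset (Finset V)} {U : Finset V} (hU : U ∈ S) :
    U ⊆ complexVerts S := fun v hv => mem_cv.mpr ⟨U, hU, hv⟩

lemma countP_two {α : Type*} [DecidableEq α] (p : α → Prop) [DecidablePred p]
    (s : Multiset α) (a b : α) (hab : a ≠ b) (h : ∀ x ∈ s, p x ↔ (x = a ∨ x = b)) :
    s.countP p = s.count a + s.count b := by
  induction s using Multiset.induction_on with
  | empty => simp
  | cons x s ih =>
    have hx := h x (Multiset.mem_cons_self x s)
    rw [Multiset.countP_cons, Multiset.count_cons, Multiset.count_cons,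
      ih (fun y hy => h y (Multiset.mem_cons_of_mem hy))]
    have key : (if p x then 1 else 0) = (if a = x then 1 else 0) + (if b = x then 1 else 0) := by
      by_cases h1 : a = x <;> by_cases h2 : b = x <;>
        simp_all [hx, eq_comm (a := x)]
    omega

lemma noPair {S : Multiset (Finset V)} {σ : V → V}
    (hσ2 : ∀ v ∈ complexVerts S, σ (σ v) = v)
    (hfree : ∀ G : Finset V, G.Nonempty → (∃ U ∈ S, G ⊆ U) → G.image σ ≠ G)
    {U : Finset V} (hU : U ∈ S) {u : V} (hu : u ∈ U) : σ u ∉ U := by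
  intro hσu
  have huv : u ∈ complexVerts S := subset_cv hU hu
  have hG : ({u, σ u} : Finset V).image σ = {u, σ u} := by
    rw [Finset.image_insert, Finset.image_singleton, hσ2 u huv, Finset.pair_comm]
  exact hfree {u, σ u} (by simp) ⟨U, hU, by
    intro x hx; rcases Finset.mem_insert.mp hx with rfl | hx
    · exact hu
    · rwa [Finset.mem_singleton.mp hx]⟩ hG

lemma star_mem {S : Multiset (Finset V)} {σ : V → V} (hσS : starM σ S = S)
    {U : Finset V} (hU : U ∈ S) : U.image σ ∈ S := by
  rw [← hσS]
  exact Multiset.mem_map_of_mem _ hU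

lemma disjFF {S : Multiset (Finset V)} {σ : V → V}
    (hσ2 : ∀ v ∈ complexVerts S, σ (σ v) = v)
    (hfree : ∀ G : Finset V, G.Nonempty → (∃ U ∈ S, G ⊆ U) → G.image σ ≠ G)
    {F : Finset V} (hF : F ∈ S) : Disjoint F (F.image σ) := by
  rw [Finset.disjoint_left]
  intro a ha hmem
  obtain ⟨w, hw, rfl⟩ := Finset.mem_image.mp hmem
  exact noPair hσ2 hfree hF hw ha


/-- the transversal determined by `A ⊆ F`. -/
def trv (σ : V → V) (F A : Finset V) : Finset V := (F \ A) ∪ A.image σ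

section CtxSec

variable {k : ℕ} {S : Multiset (Finset V)} {σ : V → V} {F : Finset V}

/-- bundled context: the hypotheses we repeatedly need. -/
structure Ctx (k : ℕ) (S : Multiset (Finset V)) (σ : V → V) (F : Finset V) : Prop where
  hMC : ∀ U ∈ S, U.card = k + 1
  hBd : ∀ K : Finset V, ¬ (K.card = k ∧ (S.countP fun U => K ⊆ U) % 2 = 1)
  hσ2 : ∀ v ∈ complexVerts S, σ (σ v) = v
  hσS : starM σ S = S
  hfree : ∀ G : Finset V, G.Nonempty → (∃ U ∈ S, G ⊆ U) → G.image σ ≠ G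
  hF : F ∈ S

namespace Ctx

lemma np (C : Ctx k S σ F) {U : Finset V} (hU : U ∈ S) {u : V} (hu : u ∈ U) : σ u ∉ U :=
  noPair C.hσ2 C.hfree hU hu

lemma sigma_not_mem_F (C : Ctx k S σ F) {w : V} (hw : w ∈ F) : σ w ∉ F :=
  C.np C.hF hw

lemma sigma_injOn (C : Ctx k S σ F) {a b : V} (ha : a ∈ complexVerts S)
    (hb : b ∈ complexVerts S) (h : σ a = σ b) : a = b := by
  rw [← C.hσ2 a ha, h, C.hσ2 b hb]

lemma F_sub_V (C : Ctx k S σ F) : F ⊆ complexVerts S := subset_cv C.hF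

lemma cardF (C : Ctx k S σ F) : F.card = k + 1 := C.hMC F C.hF

lemma Fstar_mem (C : Ctx k S σ F) : F.image σ ∈ S := star_mem C.hσS C.hF

lemma mem_trv_left (C : Ctx k S σ F) {A : Finset V} (hA : A ⊆ F) {v : V} (hv : v ∈ F) :
    v ∈ trv σ F A ↔ v ∉ A := by
  unfold trv
  rw [Finset.mem_union, Finset.mem_sdiff]
  constructor
  · rintro (⟨-, h⟩ | h)
    · exact h
    · obtain ⟨w, hw, rfl⟩ := Finset.mem_image.mp h
      exact absurd hv (C.sigma_not_mem_F (hA hw))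
  · exact fun h => Or.inl ⟨hv, h⟩

lemma mem_trv_sigma (C : Ctx k S σ F) {A : Finset V} (hA : A ⊆ F) {v : V} (hv : v ∈ F) :
    σ v ∈ trv σ F A ↔ v ∈ A := by
  unfold trv
  rw [Finset.mem_union, Finset.mem_sdiff]
  constructor
  · rintro (⟨h, -⟩ | h)
    · exact absurd h (C.sigma_not_mem_F hv)
    · obtain ⟨w, hw, hww⟩ := Finset.mem_image.mp h
      rwa [C.sigma_injOn (C.F_sub_V (hA hw)) (C.F_sub_V hv) hww] at hw
  · exact fun h => Or.inr (Finset.mem_image_of_mem _ h)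

lemma card_trv (C : Ctx k S σ F) {A : Finset V} (hA : A ⊆ F) :
    (trv σ F A).card = k + 1 := by
  have hdisj : Disjoint (F \ A) (A.image σ) := by
    refine Disjoint.mono (Finset.sdiff_subset) (Finset.image_subset_image hA)
      (disjFF C.hσ2 C.hfree C.hF)
  have hinj : (A.image σ).card = A.card :=
    Finset.card_image_of_injOn fun a ha b hb h =>
      C.sigma_injOn (C.F_sub_V (hA ha)) (C.F_sub_V (hA hb)) h
  have hle : A.card ≤ F.card := Finset.card_le_card hA
  rw [trv, Finset.card_union_of_disjoint hdisj, Finset.card_sdiff_of_subset hA, hinj, C.cardF]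
  have := C.cardF ▸ hle
  omega

lemma cardV_lower (C : Ctx k S σ F) : 2 * k + 2 ≤ (complexVerts S).card := by
  have hsub : F ∪ F.image σ ⊆ complexVerts S :=
    Finset.union_subset C.F_sub_V (subset_cv C.Fstar_mem)
  have hcard : (F ∪ F.image σ).card = 2 * k + 2 := by
    rw [Finset.card_union_of_disjoint (disjFF C.hσ2 C.hfree C.hF), C.cardF,
      C.hMC _ C.Fstar_mem]
    omega
  calc 2 * k + 2 = (F ∪ F.image σ).card := hcard.symm
    _ ≤ (complexVerts S).card := Finset.card_le_card hsub

lemma Veq (C : Ctx k S σ F) (hV : (complexVerts S).card = 2 * k + 2) :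
    complexVerts S = F ∪ F.image σ := by
  have hsub : F ∪ F.image σ ⊆ complexVerts S :=
    Finset.union_subset C.F_sub_V (subset_cv C.Fstar_mem)
  have hcard : (F ∪ F.image σ).card = 2 * k + 2 := by
    rw [Finset.card_union_of_disjoint (disjFF C.hσ2 C.hfree C.hF), C.cardF,
      C.hMC _ C.Fstar_mem]
    omega
  exact (Finset.eq_of_subset_of_card_le hsub (by omega)).symm

/-- every facet is a transversal -/
lemma transversal (C : Ctx k S σ F) (hV : (complexVerts S).card = 2 * k + 2)
    {U : Finset V} (hU : U ∈ S) {v : V} (hv : v ∈ F) : v ∈ U ∨ σ v ∈ U := by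
  classical
  set g : V → V := fun u => if u ∈ F then u else σ u with hg
  have hUV : U ⊆ complexVerts S := subset_cv hU
  have hmem : ∀ u ∈ U, u ∉ F → (u ∈ F.image σ ∧ σ u ∈ F) := by
    intro u hu hunF
    have : u ∈ F ∪ F.image σ := (C.Veq hV) ▸ hUV hu
    have humem : u ∈ F.image σ := (Finset.mem_union.mp this).resolve_left hunF
    obtain ⟨w, hw, rfl⟩ := Finset.mem_image.mp humem
    exact ⟨humem, by rwa [C.hσ2 w (C.F_sub_V hw)]⟩
  have himg : U.image g ⊆ F := by
    intro x hx
    obtain ⟨u, hu, rfl⟩ := Finset.mem_image.mp hx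
    by_cases huF : u ∈ F
    · simpa [hg, huF]
    · have := (hmem u hu huF).2
      simpa [hg, huF]
  have hinj : Set.InjOn g ↑U := by
    intro a ha b hb hab
    simp only [Finset.mem_coe] at ha hb
    by_cases haF : a ∈ F <;> by_cases hbF : b ∈ F
    · simpa [hg, haF, hbF] using hab
    · exfalso
      simp only [hg, if_pos haF, if_neg hbF] at hab
      have : σ a ∈ U := by rw [hab, C.hσ2 b (hUV hb)]; exact hb
      exact C.np hU ha this
    · exfalso
      simp only [hg, if_neg haF, if_pos hbF] at hab
      have : σ b ∈ U := by rw [← hab, C.hσ2 a (hUV ha)]; exact ha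
      exact C.np hU hb this
    · simp only [hg, if_neg haF, if_neg hbF] at hab
      exact C.sigma_injOn (hUV ha) (hUV hb) hab
  have hcardimg : (U.image g).card = k + 1 := by
    rw [Finset.card_image_of_injOn hinj, C.hMC U hU]
  have hFim : U.image g = F :=
    Finset.eq_of_subset_of_card_le himg (by rw [hcardimg, C.cardF])
  have hvim : v ∈ U.image g := hFim ▸ hv
  obtain ⟨u, hu, hgu⟩ := Finset.mem_image.mp hvim
  by_cases huF : u ∈ F
  · left; simp only [hg, if_pos huF] at hgu; rwa [hgu] at hu
  · right
    simp only [hg, if_neg huF] at hgu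
    rw [← hgu, C.hσ2 u (hUV hu)]
    exact hu

/-- every facet equals the transversal of its `A`-set -/
lemma facet_eq (C : Ctx k S σ F) (hV : (complexVerts S).card = 2 * k + 2)
    {U : Finset V} (hU : U ∈ S) :
    U = trv σ F (F.filter fun v => σ v ∈ U) := by
  set A := F.filter (fun v => σ v ∈ U) with hA
  have hAF : A ⊆ F := Finset.filter_subset _ _
  have hsub : trv σ F A ⊆ U := by
    intro x hx
    rcases Finset.mem_union.mp hx with hx | hx
    · obtain ⟨hxF, hxA⟩ := Finset.mem_sdiff.mp hx
      rcases C.transversal hV hU hxF with h | h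
      · exact h
      · have : x ∈ A := by rw [hA]; exact Finset.mem_filter.mpr ⟨hxF, h⟩
        exact absurd this hxA
    · obtain ⟨w, hw, rfl⟩ := Finset.mem_image.mp hx
      exact (Finset.mem_filter.mp hw).2
  have := Finset.eq_of_subset_of_card_le hsub
    (by rw [C.card_trv hAF, C.hMC U hU])
  exact this.symm

lemma trv_inj (C : Ctx k S σ F) {A B : Finset V} (hA : A ⊆ F) (hB : B ⊆ F)
    (h : trv σ F A = trv σ F B) : A = B := by
  ext v
  constructor
  · intro hv
    have hvF := hA hv
    exact (C.mem_trv_sigma hB hvF).mp (h ▸ (C.mem_trv_sigma hA hvF).mpr hv)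
  · intro hv
    have hvF := hB hv
    exact (C.mem_trv_sigma hA hvF).mp (h.symm ▸ (C.mem_trv_sigma hB hvF).mpr hv)

lemma trv_insert (C : Ctx k S σ F) {A : Finset V} (hA : A ⊆ F) {v : V} (hv : v ∈ F)
    (hvA : v ∉ A) :
    trv σ F (insert v A) = insert (σ v) ((trv σ F A).erase v) := by
  have hσvF : ∀ y, y ∈ A.image σ → y ≠ v := by
    rintro y hy rfl
    obtain ⟨w, hw, hww⟩ := Finset.mem_image.mp hy
    exact C.sigma_not_mem_F (hA hw) (hww ▸ hv)
  unfold trv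
  ext y
  constructor
  · intro hy
    rcases Finset.mem_union.mp hy with hy | hy
    · obtain ⟨hyF, hyni⟩ := Finset.mem_sdiff.mp hy
      rw [Finset.mem_insert] at hyni
      push_neg at hyni
      exact Finset.mem_insert_of_mem (Finset.mem_erase.mpr ⟨hyni.1,
        Finset.mem_union_left _ (Finset.mem_sdiff.mpr ⟨hyF, hyni.2⟩)⟩)
    · rw [Finset.image_insert] at hy
      rcases Finset.mem_insert.mp hy with rfl | hy
      · exact Finset.mem_insert_self _ _
      · exact Finset.mem_insert_of_mem (Finset.mem_erase.mpr ⟨hσvF y hy,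
          Finset.mem_union_right _ hy⟩)
  · intro hy
    rcases Finset.mem_insert.mp hy with rfl | hy
    · refine Finset.mem_union_right _ ?_
      rw [Finset.image_insert]
      exact Finset.mem_insert_self _ _
    · obtain ⟨hne, hyt⟩ := Finset.mem_erase.mp hy
      rcases Finset.mem_union.mp hyt with hy2 | hy2
      · obtain ⟨hyF, hyA⟩ := Finset.mem_sdiff.mp hy2
        refine Finset.mem_union_left _ (Finset.mem_sdiff.mpr ⟨hyF, ?_⟩)
        rw [Finset.mem_insert]
        push_neg
        exact ⟨hne, hyA⟩
      · refine Finset.mem_union_right _ ?_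
        rw [Finset.image_insert]
        exact Finset.mem_insert_of_mem hy2

lemma two_facets (C : Ctx k S σ F) (hV : (complexVerts S).card = 2 * k + 2)
    {A : Finset V} (hA : A ⊆ F) {v : V} (hv : v ∈ F) (hvA : v ∉ A)
    {W : Finset V} (hW : W ∈ S) :
    (trv σ F A).erase v ⊆ W ↔ (W = trv σ F A ∨ W = trv σ F (insert v A)) := by
  constructor
  · intro hKW
    set B := F.filter (fun w => σ w ∈ W) with hBdef
    have hBF : B ⊆ F := Finset.filter_subset _ _
    have hWB : W = trv σ F B := C.facet_eq hV hW
    have key : ∀ w ∈ F, w ≠ v → (w ∈ B ↔ w ∈ A) := by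
      intro w hwF hwv
      constructor
      · intro hwB
        by_contra hwA
        have h1 : w ∈ trv σ F A := (C.mem_trv_left hA hwF).mpr hwA
        have h2 : w ∈ W := hKW (Finset.mem_erase.mpr ⟨hwv, h1⟩)
        have h3 : σ w ∈ W := (Finset.mem_filter.mp hwB).2
        exact C.np hW h2 h3
      · intro hwA
        have h1 : σ w ∈ trv σ F A := (C.mem_trv_sigma hA hwF).mpr hwA
        have h2 : σ w ≠ v := fun h => C.sigma_not_mem_F hwF (h ▸ hv)
        have h3 : σ w ∈ W := hKW (Finset.mem_erase.mpr ⟨h2, h1⟩)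
        exact Finset.mem_filter.mpr ⟨hwF, h3⟩
    by_cases hvB : v ∈ B
    · right
      rw [hWB]
      congr 1
      ext w
      rw [Finset.mem_insert]
      constructor
      · intro hwB
        by_cases hwv : w = v
        · exact Or.inl hwv
        · exact Or.inr ((key w (hBF hwB) hwv).mp hwB)
      · rintro (rfl | hwA)
        · exact hvB
        · exact (key w (hA hwA) (fun h => hvA (h ▸ hwA))).mpr hwA
    · left
      rw [hWB]
      congr 1
      ext w
      constructor
      · intro hwB
        have hwv : w ≠ v := fun h => hvB (h ▸ hwB)
        exact (key w (hBF hwB) hwv).mp hwB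
      · intro hwA
        exact (key w (hA hwA) (fun h => hvA (h ▸ hwA))).mpr hwA
  · rintro (rfl | rfl)
    · exact Finset.erase_subset _ _
    · rw [C.trv_insert hA hv hvA]
      exact Finset.subset_insert _ _

lemma parity_flip (C : Ctx k S σ F) (hV : (complexVerts S).card = 2 * k + 2)
    {A : Finset V} (hA : A ⊆ F) {v : V} (hv : v ∈ F) (hvA : v ∉ A) :
    S.count (trv σ F A) % 2 = S.count (trv σ F (insert v A)) % 2 := by
  set K := (trv σ F A).erase v with hK
  have hvt : v ∈ trv σ F A := (C.mem_trv_left hA hv).mpr hvA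
  have hKcard : K.card = k := by
    rw [hK, Finset.card_erase_of_mem hvt, C.card_trv hA]
    omega
  have hne : trv σ F A ≠ trv σ F (insert v A) := by
    intro h
    have := C.trv_inj hA (Finset.insert_subset hv hA) h
    exact hvA (this ▸ Finset.mem_insert_self v A)
  have hcount : (S.countP fun U => K ⊆ U) =
      S.count (trv σ F A) + S.count (trv σ F (insert v A)) :=
    countP_two _ S _ _ hne fun W hW => C.two_facets hV hA hv hvA hW
  have hpar := C.hBd K
  rw [not_and] at hpar
  have := hpar hKcard
  omega

lemma parity_const (C : Ctx k S σ F) (hV : (complexVerts S).card = 2 * k + 2) :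
    ∀ A : Finset V, A ⊆ F → S.count (trv σ F A) % 2 = S.count F % 2 := by
  intro A
  induction A using Finset.induction_on with
  | empty =>
    intro _
    have : trv σ F ∅ = F := by simp [trv]
    rw [this]
  | @insert v A hvA ih =>
    intro hins
    have hA : A ⊆ F := (Finset.subset_insert v A).trans hins
    have hv : v ∈ F := hins (Finset.mem_insert_self v A)
    rw [← C.parity_flip hV hA hv hvA]
    exact ih hA

end Ctx

lemma even_case {k : ℕ} {S : Multiset (Finset V)} {σ : V → V} {F : Finset V}
    (C : Ctx k S σ F) (hV : (complexVerts S).card = 2 * k + 2)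
    (heven : S.count F % 2 = 0)
    (hirr : ∀ T : Multiset (Finset V), T ≤ S → T ≠ 0 → T ≠ S → starM σ T = T →
      ¬ IsSimplicialCycle k T) :
    IsTrivialZ2Irreducible S σ := by
  set F' := F.image σ with hF'
  have hFS : F ∈ S := C.hF
  have hF'S : F' ∈ S := C.Fstar_mem
  have hc1 : 1 ≤ S.count F := Multiset.one_le_count_iff_mem.mpr hFS
  have hcF : 2 ≤ S.count F := by omega
  have htrvF : trv σ F F = F' := by simp [trv, hF']
  have hparF' : S.count F' % 2 = 0 := by
    rw [← htrvF, C.parity_const hV F subset_rfl]; exact heven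
  have hc1' : 1 ≤ S.count F' := Multiset.one_le_count_iff_mem.mpr hF'S
  have hcF' : 2 ≤ S.count F' := by omega
  have hFne : F ≠ F' := by
    intro h
    have hne : F.Nonempty := by rw [← Finset.card_pos, C.cardF]; omega
    have hd := disjFF C.hσ2 C.hfree C.hF
    rw [← hF', ← h] at hd
    have h0 := disjoint_self.mp hd
    rw [Finset.bot_eq_empty] at h0
    exact hne.ne_empty h0
  set T : Multiset (Finset V) := {F, F, F', F'} with hT
  have hTc : T = F ::ₘ F ::ₘ F' ::ₘ F' ::ₘ 0 := rfl
  have hcount : ∀ G, T.count G = (if G = F then 2 else 0) + (if G = F' then 2 else 0) := by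
    intro G
    rw [hTc]
    simp only [Multiset.count_cons, Multiset.count_zero]
    by_cases h1 : G = F <;> by_cases h2 : G = F'
    · exact absurd (h1.symm.trans h2) hFne
    all_goals simp [h1, h2, hFne, Ne.symm hFne]
  have hTle : T ≤ S := by
    rw [Multiset.le_iff_count]
    intro G
    rw [hcount G]
    by_cases h1 : G = F
    · subst h1; rw [if_pos rfl, if_neg hFne]; omega
    · rw [if_neg h1]
      by_cases h2 : G = F'
      · subst h2; rw [if_pos rfl]; omega
      · rw [if_neg h2]; omega
  have hne0 : T ≠ 0 := by rw [hTc]; simp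
  have hcycle : IsSimplicialCycle k T := by
    constructor
    · intro U hU
      rw [hTc] at hU
      simp only [Multiset.mem_cons, Multiset.notMem_zero, or_false] at hU
      rcases hU with rfl | rfl | rfl | rfl
      · exact C.hMC _ hFS
      · exact C.hMC _ hFS
      · exact C.hMC _ hF'S
      · exact C.hMC _ hF'S
    · intro K hK
      obtain ⟨hK1, hK2⟩ := hK
      have : (T.countP fun U => K ⊆ U) % 2 = 0 := by
        rw [hTc]
        simp only [Multiset.countP_cons, Multiset.countP_zero]
        split_ifs <;> omega
      omega
  have hFF : F'.image σ = F := by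
    rw [hF', Finset.image_image]
    have : ∀ x ∈ F, (σ ∘ σ) x = id x := fun x hx => C.hσ2 x (C.F_sub_V hx)
    rw [Finset.image_congr this, Finset.image_id]
  have hstar : starM σ T = T := by
    rw [hTc]
    simp only [starM, Multiset.map_cons, Multiset.map_zero, hFF, ← hF']
    rw [Multiset.ext]
    intro G
    simp only [Multiset.count_cons, Multiset.count_zero]
    omega
  by_cases hTS : T = S
  · exact ⟨F, by rw [← hTS, hT, hF'], hF' ▸ disjFF C.hσ2 C.hfree C.hF⟩
  · exact absurd hcycle (hirr T hTle hne0 hTS hstar)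

lemma odd_case {k : ℕ} {S : Multiset (Finset V)} {σ : V → V} {F : Finset V}
    (C : Ctx k S σ F) (hV : (complexVerts S).card = 2 * k + 2)
    (hodd : S.count F % 2 = 1)
    (hirr : ∀ T : Multiset (Finset V), T ≤ S → T ≠ 0 → T ≠ S → starM σ T = T →
      ¬ IsSimplicialCycle k T) :
    ∃ f : V → Fin (k + 1) × Fin 2,
      Set.InjOn f ↑(complexVerts S) ∧ starM f S = crossComplex k := by
  classical
  set N : Multiset (Finset V) := F.powerset.val.map (trv σ F) with hN
  have hNnodup : N.Nodup := by
    refine Multiset.Nodup.map_on ?_ F.powerset.nodup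
    intro A hA B hB h
    exact C.trv_inj (Finset.mem_powerset.mp (Finset.mem_val.mp hA))
      (Finset.mem_powerset.mp (Finset.mem_val.mp hB)) h
  have hNcount : ∀ A : Finset V, A ⊆ F → N.count (trv σ F A) = 1 := by
    intro A hA
    exact Multiset.count_eq_one_of_mem hNnodup
      (Multiset.mem_map_of_mem _ (Finset.mem_val.mpr (Finset.mem_powerset.mpr hA)))
  have hNS : N ≤ S := by
    rw [Multiset.le_iff_count]
    intro G
    by_cases hG : G ∈ N
    · obtain ⟨A, hA, rfl⟩ := Multiset.mem_map.mp hG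
      have hAF : A ⊆ F := Finset.mem_powerset.mp (Finset.mem_val.mp hA)
      rw [hNcount A hAF]
      have hp := C.parity_const hV A hAF
      omega
    · rw [Multiset.count_eq_zero_of_notMem hG]
      exact Nat.zero_le _
  set T : Multiset (Finset V) := S - N with hT
  have hsum : N + T = S := add_tsub_cancel_of_le hNS
  have hTle : T ≤ S := tsub_le_self
  have hTmem : ∀ W ∈ T, W ∈ S := fun W hW => Multiset.mem_of_le hTle hW
  have hTcount : ∀ A : Finset V, A ⊆ F → T.count (trv σ F A) % 2 = 0 := by
    intro A hA
    rw [hT, Multiset.count_sub, hNcount A hA]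
    have hp := C.parity_const hV A hA
    omega
  have keyT : ∀ (A : Finset V), A ⊆ F → ∀ v ∈ F, v ∉ A →
      (T.countP fun U => (trv σ F A).erase v ⊆ U) % 2 = 0 := by
    intro A hA v hv hvA
    have hne : trv σ F A ≠ trv σ F (insert v A) := by
      intro h
      have := C.trv_inj hA (Finset.insert_subset hv hA) h
      exact hvA (this ▸ Finset.mem_insert_self v A)
    rw [countP_two _ T _ _ hne (fun W hW => C.two_facets hV hA hv hvA (hTmem W hW))]
    have e1 := hTcount A hA
    have e2 := hTcount (insert v A) (Finset.insert_subset hv hA)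
    omega
  have hTcycle : IsSimplicialCycle k T := by
    constructor
    · intro U hU
      exact C.hMC U (hTmem U hU)
    · intro K hK
      obtain ⟨hK1, hK2⟩ := hK
      have hpos : 0 < T.countP fun U => K ⊆ U := by omega
      obtain ⟨W, hWT, hKW⟩ := Multiset.countP_pos.mp hpos
      have hWS := hTmem W hWT
      have hWcard : W.card = k + 1 := C.hMC W hWS
      have hsd : (W \ K).card = 1 := by
        rw [Finset.card_sdiff_of_subset hKW, hWcard, hK1]
        omega
      obtain ⟨x, hx⟩ := Finset.card_eq_one.mp hsd
      have hxm : x ∈ W \ K := hx ▸ Finset.mem_singleton_self x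
      have hxW : x ∈ W := (Finset.mem_sdiff.mp hxm).1
      have hxK : x ∉ K := (Finset.mem_sdiff.mp hxm).2
      have hKe : K = W.erase x := by
        apply Finset.eq_of_subset_of_card_le
        · intro y hy
          exact Finset.mem_erase.mpr ⟨fun h => hxK (h ▸ hy), hKW hy⟩
        · rw [Finset.card_erase_of_mem hxW, hWcard, hK1]
          omega
      set B := F.filter (fun w => σ w ∈ W) with hB
      have hBF : B ⊆ F := Finset.filter_subset _ _
      have hWB : W = trv σ F B := C.facet_eq hV hWS
      have hxW2 : x ∈ (F \ B) ∪ B.image σ := by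
        rw [hWB] at hxW
        exact hxW
      rcases Finset.mem_union.mp hxW2 with hx1 | hx2
      · obtain ⟨hxF, hxB⟩ := Finset.mem_sdiff.mp hx1
        have hk0 := keyT B hBF x hxF hxB
        rw [hKe, hWB] at hK2
        omega
      · obtain ⟨w, hwB, hwx⟩ := Finset.mem_image.mp hx2
        have hwF : w ∈ F := hBF hwB
        set A' := B.erase w with hA'
        have hA'F : A' ⊆ F := (Finset.erase_subset _ _).trans hBF
        have hwA' : w ∉ A' := Finset.notMem_erase _ _
        have hBi : B = insert w A' := (Finset.insert_erase hwB).symm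
        have hσw : σ w ∉ (trv σ F A').erase w := by
          intro h
          exact hwA' ((C.mem_trv_sigma hA'F hwF).mp (Finset.mem_of_mem_erase h))
        have hKe2 : K = (trv σ F A').erase w := by
          rw [hKe, hWB, hBi, C.trv_insert hA'F hwF hwA', ← hwx,
            Finset.erase_insert hσw]
        have hk0 := keyT A' hA'F w hwF hwA'
        rw [hKe2] at hK2
        omega
  have hNne : N ≠ 0 := by
    intro h0
    rw [hN, Multiset.map_eq_zero, Finset.val_eq_zero] at h0
    exact F.powerset_nonempty.ne_empty h0
  have hperm : F.powerset.val.map (fun A => F \ A) = F.powerset.val := by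
    have hnd : (F.powerset.val.map (fun A => F \ A)).Nodup := by
      refine Multiset.Nodup.map_on ?_ F.powerset.nodup
      intro A hA B hB h
      have hAF : A ⊆ F := Finset.mem_powerset.mp (Finset.mem_val.mp hA)
      have hBF : B ⊆ F := Finset.mem_powerset.mp (Finset.mem_val.mp hB)
      have h2 : F \ (F \ A) = F \ (F \ B) := by rw [h]
      rwa [Finset.sdiff_sdiff_self_left, Finset.sdiff_sdiff_self_left,
        Finset.inter_eq_right.mpr hAF, Finset.inter_eq_right.mpr hBF] at h2
    refine (Multiset.Nodup.ext hnd F.powerset.nodup).mpr ?_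
    intro B
    constructor
    · intro hBm
      obtain ⟨A, hA, rfl⟩ := Multiset.mem_map.mp hBm
      exact Finset.mem_val.mpr (Finset.mem_powerset.mpr (Finset.sdiff_subset))
    · intro hBm
      have hBF : B ⊆ F := Finset.mem_powerset.mp (Finset.mem_val.mp hBm)
      refine Multiset.mem_map.mpr ⟨F \ B, ?_, ?_⟩
      · exact Finset.mem_val.mpr (Finset.mem_powerset.mpr (Finset.sdiff_subset))
      · rw [Finset.sdiff_sdiff_self_left, Finset.inter_eq_right.mpr hBF]
  have himtrv : ∀ A ∈ F.powerset.val, Finset.image σ (trv σ F A) = trv σ F (F \ A) := by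
    intro A hA
    have hAF : A ⊆ F := Finset.mem_powerset.mp (Finset.mem_val.mp hA)
    unfold trv
    rw [Finset.image_union, Finset.image_image]
    have h2 : A.image (σ ∘ σ) = A := by
      have : ∀ x ∈ A, (σ ∘ σ) x = id x := fun x hx => C.hσ2 x (C.F_sub_V (hAF hx))
      rw [Finset.image_congr this, Finset.image_id]
    rw [h2, Finset.sdiff_sdiff_self_left, Finset.inter_eq_right.mpr hAF, Finset.union_comm]
  have hstarN : starM σ N = N := by
    rw [hN, starM, Multiset.map_map]
    have h5 : Multiset.map (Finset.image σ ∘ trv σ F) F.powerset.val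
        = Multiset.map ((trv σ F) ∘ (fun A => F \ A)) F.powerset.val :=
      Multiset.map_congr rfl himtrv
    rw [h5, ← Multiset.map_map, hperm]
  have hTstar : starM σ T = T := by
    have h4 : starM σ N + starM σ T = S := by
      rw [starM, starM, ← Multiset.map_add]
      rw [show Multiset.map (Finset.image σ) (N + T) = starM σ (N + T) from rfl, hsum, C.hσS]
    rw [hstarN] at h4
    exact add_left_cancel (h4.trans hsum.symm)
  by_cases hT0 : T = 0
  · -- S = N : construct the isomorphism
    have hSN : S = N := by rw [← hsum, hT0, add_zero]
    have hcardF : F.card = k + 1 := C.cardF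
    let e : {x // x ∈ F} ≃ Fin (k + 1) := F.equivFin.trans (finCongr hcardF)
    set f : V → Fin (k + 1) × Fin 2 := fun v =>
      if h : v ∈ F then (e ⟨v, h⟩, 0)
      else if h2 : σ v ∈ F then (e ⟨σ v, h2⟩, 1) else (0, 0) with hf
    have hVeq := C.Veq hV
    have hnF : ∀ v ∈ complexVerts S, v ∉ F → σ v ∈ F := by
      intro v hv hvF
      have hv2 : v ∈ F ∪ F.image σ := hVeq ▸ hv
      obtain ⟨w, hw, rfl⟩ := Finset.mem_image.mp ((Finset.mem_union.mp hv2).resolve_left hvF)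
      rw [C.hσ2 w (C.F_sub_V hw)]
      exact hw
    have hf1 : ∀ (v : V) (h : v ∈ F), f v = (e ⟨v, h⟩, 0) := by
      intro v h
      rw [hf]
      exact dif_pos h
    have hf2 : ∀ (v : V), v ∉ F → ∀ (h2 : σ v ∈ F), f v = (e ⟨σ v, h2⟩, 1) := by
      intro v hvF h2
      rw [hf]
      simp only [dif_neg hvF, dif_pos h2]
    have hinj : Set.InjOn f ↑(complexVerts S) := by
      intro u hu v hv huv
      simp only [Finset.mem_coe] at hu hv
      by_cases huF : u ∈ F <;> by_cases hvF : v ∈ F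
      · rw [hf1 u huF, hf1 v hvF] at huv
        have := e.injective (congrArg Prod.fst huv)
        exact Subtype.mk_eq_mk.mp this
      · rw [hf1 u huF, hf2 v hvF (hnF v hv hvF)] at huv
        have h5 : (0 : Fin 2) = 1 := congrArg Prod.snd huv
        exact absurd h5 (by decide)
      · rw [hf2 u huF (hnF u hu huF), hf1 v hvF] at huv
        have h5 : (1 : Fin 2) = 0 := congrArg Prod.snd huv
        exact absurd h5 (by decide)
      · rw [hf2 u huF (hnF u hu huF), hf2 v hvF (hnF v hv hvF)] at huv
        have h5 := Subtype.mk_eq_mk.mp (e.injective (congrArg Prod.fst huv))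
        rw [← C.hσ2 u hu, h5, C.hσ2 v hv]
    set χ : Finset V → (Fin (k + 1) → Fin 2) := fun A i =>
      if (e.symm i : V) ∈ A then 1 else 0 with hχ
    have claim1 : ∀ A ∈ F.powerset.val,
        Finset.image f (trv σ F A) = Finset.univ.image (fun i => (i, χ A i)) := by
      intro A hA
      have hAF : A ⊆ F := Finset.mem_powerset.mp (Finset.mem_val.mp hA)
      ext x
      constructor
      · intro hx
        obtain ⟨u, hu, rfl⟩ := Finset.mem_image.mp hx
        rcases Finset.mem_union.mp hu with hu1 | hu2
        · obtain ⟨huF, huA⟩ := Finset.mem_sdiff.mp hu1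
          refine Finset.mem_image.mpr ⟨e ⟨u, huF⟩, Finset.mem_univ _, ?_⟩
          have hχ0 : χ A (e ⟨u, huF⟩) = 0 := by
            simp only [hχ]
            simp only [Equiv.symm_apply_apply]
            exact if_neg huA
          rw [hχ0, hf1 u huF]
        · obtain ⟨w, hwA, rfl⟩ := Finset.mem_image.mp hu2
          have hwF := hAF hwA
          have hσwF : σ w ∉ F := C.sigma_not_mem_F hwF
          have hσσw : σ (σ w) = w := C.hσ2 w (C.F_sub_V hwF)
          have h2 : σ (σ w) ∈ F := by rw [hσσw]; exact hwF
          refine Finset.mem_image.mpr ⟨e ⟨w, hwF⟩, Finset.mem_univ _, ?_⟩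
          have hχ1 : χ A (e ⟨w, hwF⟩) = 1 := by
            simp only [hχ]
            simp only [Equiv.symm_apply_apply]
            exact if_pos hwA
          have hsub : (⟨σ (σ w), h2⟩ : {x // x ∈ F}) = ⟨w, hwF⟩ := Subtype.ext hσσw
          rw [hχ1, hf2 (σ w) hσwF h2, hsub]
      · intro hx
        obtain ⟨i, -, rfl⟩ := Finset.mem_image.mp hx
        have hvF : (e.symm i : V) ∈ F := (e.symm i).2
        have hei : e ⟨(e.symm i : V), hvF⟩ = i := by
          rw [Subtype.coe_eta]
          exact e.apply_symm_apply i
        by_cases hvA : (e.symm i : V) ∈ A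
        · have hχ1 : χ A i = 1 := by simp only [hχ]; exact if_pos hvA
          refine Finset.mem_image.mpr ⟨σ (e.symm i : V), ?_, ?_⟩
          · exact Finset.mem_union_right _ (Finset.mem_image_of_mem σ hvA)
          · have hσvF : σ (e.symm i : V) ∉ F := C.sigma_not_mem_F hvF
            have hσσ : σ (σ (e.symm i : V)) = (e.symm i : V) := C.hσ2 _ (C.F_sub_V hvF)
            have h2 : σ (σ (e.symm i : V)) ∈ F := by rw [hσσ]; exact hvF
            have hsub : (⟨σ (σ (e.symm i : V)), h2⟩ : {x // x ∈ F}) = ⟨(e.symm i : V), hvF⟩ :=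
              Subtype.ext hσσ
            rw [hf2 _ hσvF h2, hsub, hei, hχ1]
        · have hχ0 : χ A i = 0 := by simp only [hχ]; exact if_neg hvA
          refine Finset.mem_image.mpr ⟨(e.symm i : V), ?_, ?_⟩
          · exact Finset.mem_union_left _ (Finset.mem_sdiff.mpr ⟨hvF, hvA⟩)
          · rw [hf1 _ hvF, hei, hχ0]
    have claim2 : F.powerset.val.map χ = (Finset.univ.val : Multiset (Fin (k + 1) → Fin 2)) := by
      have hnd : (F.powerset.val.map χ).Nodup := by
        refine Multiset.Nodup.map_on ?_ F.powerset.nodup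
        intro A hA B hB h
        have hAF : A ⊆ F := Finset.mem_powerset.mp (Finset.mem_val.mp hA)
        have hBF : B ⊆ F := Finset.mem_powerset.mp (Finset.mem_val.mp hB)
        ext v
        by_cases hvF : v ∈ F
        · have h1 := congrFun h (e ⟨v, hvF⟩)
          simp only [hχ] at h1
          simp only [Equiv.symm_apply_apply] at h1
          constructor
          · intro hv
            rw [if_pos hv] at h1
            by_contra hv2
            rw [if_neg hv2] at h1
            exact absurd h1 (by decide)
          · intro hv
            rw [if_pos hv] at h1
            by_contra hv2
            rw [if_neg hv2] at h1
            exact absurd h1 (by decide)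
        · exact iff_of_false (fun hh => hvF (hAF hh)) (fun hh => hvF (hBF hh))
      refine (Multiset.Nodup.ext hnd Finset.univ.nodup).mpr ?_
      intro ε
      simp only [Finset.mem_val, Finset.mem_univ, iff_true]
      rw [Multiset.mem_map]
      refine ⟨(Finset.univ.filter fun i => ε i = 1).image (fun i => ((e.symm i : V))), ?_, ?_⟩
      · refine Finset.mem_val.mpr (Finset.mem_powerset.mpr ?_)
        intro a ha
        obtain ⟨i, -, rfl⟩ := Finset.mem_image.mp ha
        exact (e.symm i).2
      · funext i
        have hmem : ((e.symm i : V) ∈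
            (Finset.univ.filter fun i => ε i = 1).image (fun i => ((e.symm i : V)))) ↔
            ε i = 1 := by
          constructor
          · intro h
            obtain ⟨j, hj, hji⟩ := Finset.mem_image.mp h
            have : j = i := e.symm.injective (Subtype.coe_injective hji)
            rw [← this]
            exact (Finset.mem_filter.mp hj).2
          · intro h
            exact Finset.mem_image_of_mem _ (Finset.mem_filter.mpr ⟨Finset.mem_univ _, h⟩)
        simp only [hχ]
        by_cases h : ε i = 1
        · rw [if_pos (hmem.mpr h), h]
        · rw [if_neg (fun hh => h (hmem.mp hh))]
          omega
    refine ⟨f, hinj, ?_⟩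
    rw [hSN, hN, starM, Multiset.map_map]
    have h6 : Multiset.map (Finset.image f ∘ trv σ F) F.powerset.val
        = Multiset.map ((fun ε => Finset.univ.image fun i => (i, ε i)) ∘ χ) F.powerset.val :=
      Multiset.map_congr rfl claim1
    rw [h6, ← Multiset.map_map, claim2]
    rfl
  · have hTne : T ≠ S := by
      intro h
      rw [h] at hsum
      have : N + S = 0 + S := by rw [hsum, zero_add]
      exact hNne (add_right_cancel this)
    exact absurd hTcycle (hirr T hTle hT0 hTne hTstar)

end CtxSec

end S10


/-- Minimum number of vertices of a `ℤ₂`-irreducible `k`-cycle. -/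
theorem statement10 {V : Type*} [DecidableEq V] (k : ℕ) (hk : 1 ≤ k)
    (S : Multiset (Finset V)) (σ : V → V) (h : IsZ2IrreducibleCycle k S σ) :
    2 * k + 2 ≤ (complexVerts S).card ∧
      ((complexVerts S).card = 2 * k + 2 ↔
        IsTrivialZ2Irreducible S σ ∨
          ∃ f : V → Fin (k + 1) × Fin 2,
            Set.InjOn f ↑(complexVerts S) ∧ starM f S = crossComplex k) := by
  classical
  obtain ⟨⟨⟨hMC, hBd⟩, hσ2, hσS, hfree⟩, hne, hirr⟩ := h
  obtain ⟨F, hF⟩ := Multiset.exists_mem_of_ne_zero hne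
  have C : S10.Ctx k S σ F := ⟨hMC, hBd, hσ2, hσS, hfree, hF⟩
  refine ⟨C.cardV_lower, ?_, ?_⟩
  · intro hV
    rcases Nat.mod_two_eq_zero_or_one (S.count F) with he | ho
    · exact Or.inl (S10.even_case C hV he hirr)
    · exact Or.inr (S10.odd_case C hV ho hirr)
  · intro hOr
    rcases hOr with ⟨G, hS, hdisj⟩ | ⟨f, hinj, hmap⟩
    · have hG : G ∈ S := by rw [hS]; simp
      have hG' : G.image σ ∈ S := by rw [hS]; simp
      have hcG : G.card = k + 1 := hMC G hG
      have hcG' : (G.image σ).card = k + 1 := hMC _ hG'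
      have hveq : complexVerts S = G ∪ G.image σ := by
        ext v
        rw [S10.mem_cv, Finset.mem_union]
        constructor
        · rintro ⟨U, hU, hvU⟩
          rw [hS] at hU
          simp only [Multiset.insert_eq_cons, Multiset.mem_cons, Multiset.mem_singleton] at hU
          rcases hU with rfl | rfl | rfl | rfl
          · exact Or.inl hvU
          · exact Or.inl hvU
          · exact Or.inr hvU
          · exact Or.inr hvU
        · rintro (h | h)
          · exact ⟨G, hG, h⟩
          · exact ⟨G.image σ, hG', h⟩
      rw [hveq, Finset.card_union_of_disjoint hdisj, hcG, hcG']
      omega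
    · have him : Finset.image f (complexVerts S) = complexVerts (crossComplex k) := by
        ext y
        rw [Finset.mem_image]
        constructor
        · rintro ⟨v, hv, rfl⟩
          obtain ⟨U, hU, hvU⟩ := S10.mem_cv.mp hv
          refine S10.mem_cv.mpr ⟨U.image f, ?_, Finset.mem_image_of_mem f hvU⟩
          rw [← hmap]
          exact Multiset.mem_map_of_mem _ hU
        · intro hy
          obtain ⟨W, hW, hyW⟩ := S10.mem_cv.mp hy
          rw [← hmap] at hW
          obtain ⟨U, hU, rfl⟩ := Multiset.mem_map.mp hW
          obtain ⟨v, hvU, rfl⟩ := Finset.mem_image.mp hyW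
          exact ⟨v, S10.subset_cv hU hvU, rfl⟩
      have hcross : complexVerts (crossComplex k) = Finset.univ := by
        ext x
        obtain ⟨i, b⟩ := x
        simp only [Finset.mem_univ, iff_true]
        refine S10.mem_cv.mpr ⟨_,
          Multiset.mem_map_of_mem _ (Finset.mem_val.mpr (Finset.mem_univ (fun _ => b))), ?_⟩
        exact Finset.mem_image_of_mem _ (Finset.mem_univ i)
      have hcard2 : (complexVerts (crossComplex k)).card = 2 * k + 2 := by
        rw [hcross, Finset.card_univ, Fintype.card_prod, Fintype.card_fin, Fintype.card_fin]
        omega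
      rw [← Finset.card_image_of_injOn hinj, him, hcard2]
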